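/- For every complex number q with ‖q‖ < 1, the function x ↦ θ(e^{−x}; q) (from ℝ to ℂ) is differentiable at x = 0 with derivative equal to (q;q)_∞² = ∏_{n≥1} (1 − q^n)². -/

import Mathlib

open Complex Filter Topology

/-- The modified Jacobi theta function `θ(z;q) = ∏_{j ≥ 0} (1 - z q^j)(1 - q^{j+1}/z)`. -/
noncomputable def jacobiTheta' (z q : ℂ) : ℂ :=
  ∏' j : ℕ, (1 - z * q ^ j) * (1 - q ^ (j + 1) / z)

lemma aux_ne_zero {z : ℂ} (h : ‖z‖ < 1) : (1 : ℂ) + z ≠ 0 := by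
  intro h0
  have hz : z = -1 := by linear_combination h0
  rw [hz] at h
  simp at h

lemma aux_slitPlane {z : ℂ} (h : ‖z‖ < 1) : (1 : ℂ) + z ∈ Complex.slitPlane :=
  Complex.mem_slitPlane_of_norm_lt_one h

lemma aux_log_le {c : ℝ} (hc : c < 1) {z : ℂ} (hz : ‖z‖ ≤ c) :
    ‖Complex.log (1 + z)‖ ≤ (c * (1 - c)⁻¹ / 2 + 1) * ‖z‖ := by
  have h1 : ‖z‖ < 1 := lt_of_le_of_lt hz hc
  have h0 : (0:ℝ) ≤ c := le_trans (norm_nonneg z) hz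
  have hcpos : (0:ℝ) < 1 - c := by linarith
  calc ‖Complex.log (1 + z)‖ ≤ ‖z‖ ^ 2 * (1 - ‖z‖)⁻¹ / 2 + ‖z‖ :=
        Complex.norm_log_one_add_le h1
    _ ≤ (c * ‖z‖) * (1 - c)⁻¹ / 2 + ‖z‖ := by
        have e1 : ‖z‖ ^ 2 ≤ c * ‖z‖ := by
          rw [sq]; exact mul_le_mul_of_nonneg_right hz (norm_nonneg z)
        have e2 : (1 - ‖z‖)⁻¹ ≤ (1 - c)⁻¹ := by
          apply inv_anti₀ hcpos; linarith
        have e3 : ‖z‖ ^ 2 * (1 - ‖z‖)⁻¹ ≤ (c * ‖z‖) * (1 - c)⁻¹ :=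
          mul_le_mul e1 e2 (inv_nonneg.mpr (by linarith)) (mul_nonneg h0 (norm_nonneg z))
        linarith
    _ = (c * (1 - c)⁻¹ / 2 + 1) * ‖z‖ := by ring

lemma aux_log_summable {a : ℕ → ℂ} {c : ℝ} (hc : c < 1) (h : ∀ j, ‖a j‖ ≤ c)
    (hs : Summable fun j => ‖a j‖) : Summable (fun j => Complex.log (1 + a j)) := by
  apply Summable.of_norm
  apply Summable.of_nonneg_of_le (fun j => norm_nonneg _)
    (fun j => aux_log_le hc (h j)) (hs.mul_left _)

lemma aux_hasProd {a : ℕ → ℂ} {c : ℝ} (hc : c < 1) (h : ∀ j, ‖a j‖ ≤ c)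
    (hs : Summable fun j => ‖a j‖) :
    HasProd (fun j => 1 + a j) (Complex.exp (∑' j, Complex.log (1 + a j))) := by
  have hl := aux_log_summable hc h hs
  have H := hl.hasSum.cexp
  have e : (Complex.exp ∘ fun j => Complex.log (1 + a j)) = fun j => 1 + a j :=
    funext fun j => Complex.exp_log (aux_ne_zero (lt_of_le_of_lt (h j) hc))
  rwa [e] at H

lemma aux_multipliable {a : ℕ → ℂ} {c : ℝ} (hc : c < 1) (h : ∀ j, ‖a j‖ ≤ c)
    (hs : Summable fun j => ‖a j‖) : Multipliable (fun j => 1 + a j) :=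
  ⟨_, aux_hasProd hc h hs⟩

/-- The factor functions. -/
noncomputable def jf (q : ℂ) (j : ℕ) (x : ℝ) : ℂ :=
  (1 - Complex.exp (-(x:ℂ)) * q ^ j) * (1 - q ^ (j + 1) * Complex.exp (x:ℂ))

lemma jf_cont (q : ℂ) (j : ℕ) : Continuous (jf q j) := by
  unfold jf
  fun_prop

lemma jacobiTheta'_eq (q : ℂ) (x : ℝ) :
    jacobiTheta' ((Real.exp (-x) : ℝ) : ℂ) q = ∏' j, jf q j x := by
  unfold jacobiTheta'
  refine tprod_congr fun j => ?_
  have hz : ((Real.exp (-x) : ℝ) : ℂ) = Complex.exp (-(x:ℂ)) := by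
    rw [Complex.ofReal_exp]; push_cast; ring_nf
  rw [hz, jf, Complex.exp_neg, div_eq_mul_inv, inv_inv]

/-- the derivative of `x ↦ θ(e^{-x}; q)` at `x = 0` is `(q;q)_∞²`. -/
theorem theta_deriv_at_one (q : ℂ) (hq : ‖q‖ < 1) :
    HasDerivAt (fun x : ℝ => jacobiTheta' ((Real.exp (-x) : ℝ) : ℂ) q)
      (∏' n : ℕ, (1 - q ^ (n + 1)) ^ 2) 0 := by
  set r : ℝ := ‖q‖ with hr
  have hr0 : 0 ≤ r := norm_nonneg q
  have hr1 : r < 1 := hq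
  set s : ℝ := (1 + r) / 2 with hs
  have hrs : r < s := by rw [hs]; linarith
  have hs1 : s < 1 := by rw [hs]; linarith
  have hs0 : 0 ≤ s := by rw [hs]; linarith
  -- choose δ
  have htend : Filter.Tendsto (fun u : ℝ => Real.exp u * r) (𝓝 0) (𝓝 r) := by
    have := (Real.continuous_exp.tendsto 0).mul_const r
    simpa using this
  have hev : ∀ᶠ u in 𝓝 (0:ℝ), Real.exp u * r < s := htend.eventually_lt_const hrs
  obtain ⟨δ, hδpos, hδ⟩ := Metric.eventually_nhds_iff_ball.mp hev
  set S : Set ℝ := Metric.ball (0:ℝ) δ with hSdef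
  have hS0 : (0:ℝ) ∈ S := Metric.mem_ball_self hδpos
  have hSnhds : S ∈ 𝓝 (0:ℝ) := Metric.ball_mem_nhds 0 hδpos
  have hSneg : ∀ x ∈ S, -x ∈ S := by
    intro x hx
    simp only [hSdef, Metric.mem_ball, Real.dist_eq, sub_zero] at hx ⊢
    rwa [abs_neg]
  -- basic bounds
  have hrpow : ∀ j : ℕ, (r : ℝ) ^ j ≤ 1 := fun j => pow_le_one₀ hr0 hr1.le
  have hA : ∀ x ∈ S, ∀ m : ℕ, ‖Complex.exp (-(x:ℂ)) * q ^ (m + 1)‖ ≤ s * r ^ m := by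
    intro x hx m
    have h1 : Real.exp (-x) * r < s := hδ _ (hSneg x hx)
    have he : ‖Complex.exp (-(x:ℂ))‖ = Real.exp (-x) := by
      rw [Complex.norm_exp]; simp
    have : ‖Complex.exp (-(x:ℂ)) * q ^ (m + 1)‖ = Real.exp (-x) * r ^ (m + 1) := by
      rw [norm_mul, norm_pow, he, ← hr]
    rw [this, pow_succ']
    calc Real.exp (-x) * (r * r ^ m) = (Real.exp (-x) * r) * r ^ m := by ring
      _ ≤ s * r ^ m := by
          apply mul_le_mul_of_nonneg_right h1.le (pow_nonneg hr0 m)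
  have hB : ∀ x ∈ S, ∀ m : ℕ, ‖q ^ (m + 2) * Complex.exp ((x:ℂ))‖ ≤ s * r ^ m := by
    intro x hx m
    have h1 : Real.exp x * r < s := hδ _ hx
    have he : ‖Complex.exp ((x:ℂ))‖ = Real.exp x := by
      rw [Complex.norm_exp]; simp
    have : ‖q ^ (m + 2) * Complex.exp ((x:ℂ))‖ = Real.exp x * r ^ (m + 2) := by
      rw [norm_mul, norm_pow, he, ← hr]; ring
    rw [this]
    have : Real.exp x * r ^ (m + 2) = (Real.exp x * r) * (r ^ m * r) := by ring
    rw [this]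
    calc (Real.exp x * r) * (r ^ m * r) ≤ s * (r ^ m * 1) := by
          apply mul_le_mul h1.le _ (by positivity) hs0
          exact mul_le_mul_of_nonneg_left hr1.le (pow_nonneg hr0 m)
      _ = s * r ^ m := by ring
  -- multipliability of the shifted tails
  have hMA : ∀ x ∈ S, ∀ k : ℕ,
      Multipliable (fun j => 1 - Complex.exp (-(x:ℂ)) * q ^ (j + k + 1)) := by
    intro x hx k
    have := aux_multipliable (a := fun j => -(Complex.exp (-(x:ℂ)) * q ^ (j + k + 1)))
      (c := s) hs1 (fun j => ?_) ?_
    · refine this.congr fun j => by ring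
    · rw [norm_neg]
      calc ‖Complex.exp (-(x:ℂ)) * q ^ (j + k + 1)‖ ≤ s * r ^ (j + k) := hA x hx _
        _ ≤ s * 1 := by
            apply mul_le_mul_of_nonneg_left (hrpow _) hs0
        _ = s := mul_one s
    · apply Summable.of_nonneg_of_le (fun j => norm_nonneg _) (fun j => ?_)
        ((summable_geometric_of_lt_one hr0 hr1).mul_left s)
      rw [norm_neg]
      calc ‖Complex.exp (-(x:ℂ)) * q ^ (j + k + 1)‖ ≤ s * r ^ (j + k) := hA x hx _
        _ ≤ s * r ^ j := by
            apply mul_le_mul_of_nonneg_left _ hs0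
            exact pow_le_pow_of_le_one hr0 hr1.le (Nat.le_add_right j k)
  have hMB : ∀ x ∈ S, ∀ k : ℕ,
      Multipliable (fun j => 1 - q ^ (j + k + 2) * Complex.exp ((x:ℂ))) := by
    intro x hx k
    have := aux_multipliable (a := fun j => -(q ^ (j + k + 2) * Complex.exp ((x:ℂ))))
      (c := s) hs1 (fun j => ?_) ?_
    · refine this.congr fun j => by ring
    · rw [norm_neg]
      calc ‖q ^ (j + k + 2) * Complex.exp ((x:ℂ))‖ ≤ s * r ^ (j + k) := hB x hx _
        _ ≤ s * 1 := mul_le_mul_of_nonneg_left (hrpow _) hs0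
        _ = s := mul_one s
    · apply Summable.of_nonneg_of_le (fun j => norm_nonneg _) (fun j => ?_)
        ((summable_geometric_of_lt_one hr0 hr1).mul_left s)
      rw [norm_neg]
      calc ‖q ^ (j + k + 2) * Complex.exp ((x:ℂ))‖ ≤ s * r ^ (j + k) := hB x hx _
        _ ≤ s * r ^ j := by
            apply mul_le_mul_of_nonneg_left _ hs0
            exact pow_le_pow_of_le_one hr0 hr1.le (Nat.le_add_right j k)
  have hjf_eq : ∀ (x : ℝ) (k j : ℕ), jf q (j + k + 1) x =
      (1 - Complex.exp (-(x:ℂ)) * q ^ (j + k + 1)) * (1 - q ^ (j + k + 2) * Complex.exp ((x:ℂ))) := by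
    intro x k j
    rw [jf]
  have hMtail : ∀ x ∈ S, ∀ k : ℕ, Multipliable (fun j => jf q (j + k + 1) x) := by
    intro x hx k
    have := (hMA x hx k).mul (hMB x hx k)
    exact this.congr fun j => (hjf_eq x k j).symm
  -- G : the tail product
  set G : ℝ → ℂ := fun x => ∏' j, jf q (j + 1) x with hGdef
  have hsplit : ∀ x ∈ S, (∏' j, jf q j x) = jf q 0 x * G x := by
    intro x hx
    have hm : Multipliable (fun j : ℕ => jf q (j + 1) x) := by
      have := hMtail x hx 0
      exact this.congr fun j => by norm_num
    exact tprod_eq_zero_mul' hm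
  -- tail bound for f - 1
  have hjfsub : ∀ x ∈ S, ∀ m : ℕ, ‖jf q (m + 1) x - 1‖ ≤ 3 * s * r ^ m := by
    intro x hx m
    set a := Complex.exp (-(x:ℂ)) * q ^ (m + 1) with ha
    set b := q ^ (m + 2) * Complex.exp ((x:ℂ)) with hb
    have h1 : jf q (m + 1) x - 1 = a * b - (a + b) := by
      rw [jf]; ring
    have hna : ‖a‖ ≤ s * r ^ m := hA x hx m
    have hnb : ‖b‖ ≤ s * r ^ m := hB x hx m
    have hsr1 : s * r ^ m ≤ 1 := by
      calc s * r ^ m ≤ 1 * 1 := mul_le_mul hs1.le (hrpow m) (by positivity) zero_le_one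
        _ = 1 := one_mul 1
    have hab : ‖a‖ * ‖b‖ ≤ (s * r ^ m) * (s * r ^ m) :=
      mul_le_mul hna hnb (norm_nonneg b) (by positivity)
    have h2 : (s * r ^ m) * (s * r ^ m) ≤ 1 * (s * r ^ m) :=
      mul_le_mul_of_nonneg_right hsr1 (by positivity)
    calc ‖jf q (m + 1) x - 1‖ = ‖a * b - (a + b)‖ := by rw [h1]
      _ ≤ ‖a * b‖ + ‖a + b‖ := norm_sub_le _ _
      _ ≤ ‖a‖ * ‖b‖ + (‖a‖ + ‖b‖) := by
          rw [norm_mul]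
          exact add_le_add_right (norm_add_le a b) _
      _ ≤ 3 * (s * r ^ m) := by linarith
      _ = 3 * s * r ^ m := by ring
  -- choose N with 3 * s * r ^ N ≤ 1/2
  obtain ⟨N, hN⟩ : ∃ N : ℕ, 3 * s * r ^ N < 1 / 2 := by
    have h0 : Filter.Tendsto (fun n : ℕ => 3 * s * r ^ n) Filter.atTop (𝓝 0) := by
      have := (tendsto_pow_atTop_nhds_zero_of_lt_one hr0 hr1).const_mul (3 * s)
      simpa using this
    exact (h0.eventually_lt_const (by norm_num)).exists
  have htail_half : ∀ x ∈ S, ∀ j : ℕ, ‖jf q (j + N + 1) x - 1‖ ≤ (1 / 2) * r ^ j := by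
    intro x hx j
    calc ‖jf q (j + N + 1) x - 1‖ ≤ 3 * s * r ^ (j + N) := hjfsub x hx (j + N)
      _ = (3 * s * r ^ N) * r ^ j := by rw [pow_add]; ring
      _ ≤ (1 / 2) * r ^ j := by
          apply mul_le_mul_of_nonneg_right hN.le (pow_nonneg hr0 j)
  have htail_half' : ∀ x ∈ S, ∀ j : ℕ, ‖jf q (j + N + 1) x - 1‖ ≤ 1 / 2 := by
    intro x hx j
    calc ‖jf q (j + N + 1) x - 1‖ ≤ (1 / 2) * r ^ j := htail_half x hx j
      _ ≤ (1 / 2) * 1 := by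
          apply mul_le_mul_of_nonneg_left (hrpow j) (by norm_num)
      _ = 1 / 2 := mul_one _
  -- summability of the logs of the tail, with uniform bound
  have hlog_bound : ∀ x ∈ S, ∀ j : ℕ, ‖Complex.log (jf q (j + N + 1) x)‖ ≤ (3 / 4) * r ^ j := by
    intro x hx j
    have h1 : jf q (j + N + 1) x = 1 + (jf q (j + N + 1) x - 1) := by ring
    rw [h1]
    calc ‖Complex.log (1 + (jf q (j + N + 1) x - 1))‖
        ≤ (3 / 2) * ‖jf q (j + N + 1) x - 1‖ :=
          Complex.norm_log_one_add_half_le_self (htail_half' x hx j)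
      _ ≤ (3 / 2) * ((1 / 2) * r ^ j) := by
          apply mul_le_mul_of_nonneg_left (htail_half x hx j) (by norm_num)
      _ = (3 / 4) * r ^ j := by ring
  have hlog_summable : ∀ x ∈ S, Summable (fun j => Complex.log (jf q (j + N + 1) x)) := by
    intro x hx
    apply Summable.of_norm
    exact Summable.of_nonneg_of_le (fun j => norm_nonneg _) (hlog_bound x hx)
      ((summable_geometric_of_lt_one hr0 hr1).mul_left (3 / 4))
  have hjf_ne : ∀ x ∈ S, ∀ j : ℕ, jf q (j + N + 1) x ≠ 0 := by
    intro x hx j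
    have h1 : jf q (j + N + 1) x = 1 + (jf q (j + N + 1) x - 1) := by ring
    rw [h1]
    exact aux_ne_zero (lt_of_le_of_lt (htail_half' x hx j) (by norm_num))
  -- the tail product equals exp of sum of logs
  set T : ℝ → ℂ := fun x => ∏' j, jf q (j + N + 1) x with hTdef
  have hT_eq : ∀ x ∈ S, T x = Complex.exp (∑' j, Complex.log (jf q (j + N + 1) x)) := by
    intro x hx
    have H := (hlog_summable x hx).hasSum.cexp
    have e : (Complex.exp ∘ fun j => Complex.log (jf q (j + N + 1) x)) =
        fun j => jf q (j + N + 1) x :=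
      funext fun j => Complex.exp_log (hjf_ne x hx j)
    rw [e] at H
    exact H.tprod_eq
  -- continuity of T on S
  have hT_cont : ContinuousOn T S := by
    have hL : ContinuousOn (fun x => ∑' j, Complex.log (jf q (j + N + 1) x)) S := by
      apply continuousOn_tsum (u := fun j => (3 / 4) * r ^ j)
      · intro j
        apply ContinuousOn.clog ((jf_cont q (j + N + 1)).continuousOn)
        intro x hx
        have h1 : jf q (j + N + 1) x = 1 + (jf q (j + N + 1) x - 1) := by ring
        rw [h1]
        exact aux_slitPlane (lt_of_le_of_lt (htail_half' x hx j) (by norm_num))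
      · exact (summable_geometric_of_lt_one hr0 hr1).mul_left (3 / 4)
      · intro j x hx
        exact hlog_bound x hx j
    exact (hL.cexp).congr hT_eq
  -- G = finite product * T on S, so G is continuous on S
  have hG_split : ∀ x ∈ S, G x = (∏ i ∈ Finset.range N, jf q (i + 1) x) * T x := by
    intro x hx
    exact (Multipliable.prod_mul_tprod_nat_mul' (f := fun j => jf q (j + 1) x) (k := N)
      (hMtail x hx N)).symm
  have hG_cont : ContinuousOn G S := by
    have h1 : ContinuousOn (fun x => (∏ i ∈ Finset.range N, jf q (i + 1) x) * T x) S := by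
      apply ContinuousOn.mul _ hT_cont
      apply continuousOn_finset_prod
      intro i _
      exact (jf_cont q (i + 1)).continuousOn
    exact h1.congr hG_split
  have hG_at : Filter.Tendsto G (𝓝[≠] (0:ℝ)) (𝓝 (G 0)) :=
    ((hG_cont.continuousAt hSnhds).tendsto).mono_left nhdsWithin_le_nhds
  -- derivative of jf q 0 at 0
  have hf0_deriv : HasDerivAt (fun x : ℝ => jf q 0 x) (1 - q) 0 := by
    have hd1 : HasDerivAt (fun x : ℝ => Complex.exp (-(x:ℂ))) (-1 : ℂ) 0 := by
      have hofr : HasDerivAt (fun x : ℝ => -(x : ℂ)) (-1 : ℂ) 0 := by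
        exact ((hasDerivAt_id (0:ℝ)).ofReal_comp).neg
      have := hofr.cexp
      simpa using this
    have hd2 : HasDerivAt (fun x : ℝ => Complex.exp ((x:ℂ))) (1 : ℂ) 0 := by
      have hofr : HasDerivAt (fun x : ℝ => (x : ℂ)) (1 : ℂ) 0 := Complex.ofRealCLM.hasDerivAt
      have := hofr.cexp
      simpa using this
    have h1 : HasDerivAt (fun x : ℝ => 1 - Complex.exp (-(x:ℂ)) * q ^ 0) (1 : ℂ) 0 := by
      have := (hd1.mul_const ((q:ℂ) ^ 0)).const_sub 1
      convert this using 1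
      · rfl
      simp
    have h2 : HasDerivAt (fun x : ℝ => 1 - q ^ (0 + 1) * Complex.exp ((x:ℂ))) (-q : ℂ) 0 := by
      have := (hd2.const_mul ((q:ℂ) ^ (0 + 1))).const_sub 1
      convert this using 1
      · rfl
      simp
    have := h1.mul h2
    have e0 : jf q 0 = fun x : ℝ =>
        (1 - Complex.exp (-(x:ℂ)) * q ^ 0) * (1 - q ^ (0 + 1) * Complex.exp ((x:ℂ))) := rfl
    rw [e0]
    convert this using 1
    · rfl
    · rfl
    simp
  have hf0_zero : jf q 0 0 = 0 := by
    simp [jf]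
  -- the full function equals jf 0 * G near 0, with value 0 at 0
  set Fq : ℝ → ℂ := fun x => jacobiTheta' ((Real.exp (-x) : ℝ) : ℂ) q with hFqdef
  have hFq_eq : ∀ x ∈ S, Fq x = jf q 0 x * G x := by
    intro x hx
    rw [hFqdef]
    simp only
    rw [jacobiTheta'_eq q x]
    exact hsplit x hx
  have hFq0 : Fq 0 = 0 := by
    rw [hFq_eq 0 hS0, hf0_zero, zero_mul]
  -- conclude via slopes
  rw [hasDerivAt_iff_tendsto_slope]
  have hslope0 : Filter.Tendsto (slope (fun x : ℝ => jf q 0 x) 0) (𝓝[≠] 0) (𝓝 (1 - q)) :=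
    hasDerivAt_iff_tendsto_slope.mp hf0_deriv
  have key : Filter.Tendsto (fun x => slope (fun y : ℝ => jf q 0 y) 0 x * G x) (𝓝[≠] 0)
      (𝓝 ((1 - q) * G 0)) := hslope0.mul hG_at
  have heq : ∀ᶠ x in 𝓝[≠] (0:ℝ), slope (fun y : ℝ => jf q 0 y) 0 x * G x = slope Fq 0 x := by
    have hS' : S ∈ 𝓝[≠] (0:ℝ) := nhdsWithin_le_nhds hSnhds
    filter_upwards [hS'] with x hx
    rw [slope_def_module, slope_def_module, hFq_eq x hx, hFq0, hf0_zero]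
    simp only [sub_zero]
    rw [smul_mul_assoc]
  have final : Filter.Tendsto (slope Fq 0) (𝓝[≠] 0) (𝓝 ((1 - q) * G 0)) :=
    key.congr' heq
  -- now identify the limit
  have hval : (1 - q) * G 0 = ∏' n : ℕ, (1 - q ^ (n + 1)) ^ 2 := by
    have hMA0 : Multipliable (fun j : ℕ => 1 - q ^ (j + 1)) := by
      have := hMA 0 hS0 0
      refine this.congr fun j => by simp
    have hMB0 : Multipliable (fun j : ℕ => 1 - q ^ (j + 2)) := by
      have := hMB 0 hS0 0
      refine this.congr fun j => by simp
    have hG0 : G 0 = (∏' j : ℕ, (1 - q ^ (j + 1))) * (∏' j : ℕ, (1 - q ^ (j + 2))) := by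
      rw [hGdef]
      simp only
      rw [← Multipliable.tprod_mul hMA0 hMB0]
      refine tprod_congr fun j => ?_
      simp [jf]
    have hPA : (∏' j : ℕ, (1 - q ^ (j + 1))) = (1 - q) * ∏' j : ℕ, (1 - q ^ (j + 2)) := by
      have := tprod_eq_zero_mul' (f := fun j : ℕ => 1 - q ^ (j + 1))
        (hMB0.congr fun j => by norm_num)
      simpa using this
    have hP : (∏' n : ℕ, (1 - q ^ (n + 1)) ^ 2) =
        (∏' j : ℕ, (1 - q ^ (j + 1))) * (∏' j : ℕ, (1 - q ^ (j + 1))) := by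
      rw [← Multipliable.tprod_mul hMA0 hMA0]
      exact tprod_congr fun n => sq _
    rw [hG0, hP, hPA]
    ring
  rw [← hval]
  exact final
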